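/- Let λ = clip((ρy₁ + (1−ρ)y₂ − x)/(relu(ρy₁ + (1−ρ)y₂ − q) + η), 0, 1) where ρ ∈ [0,1], y₁, y₂, x, q ∈ ℝ, η > 0, clip(u,0,1) = max(0, min(1,u)), and relu(u) = max(0,u). If q ≤ min(y₁, y₂) and ρy₁ + (1−ρ)y₂ > x ≥ q, then as η → 0⁺, (1−λ)·(ρy₁ + (1−ρ)y₂) + λ·q → min(ρy₁ + (1−ρ)y₂, x), and for every η > 0 one has (1−λ)·(ρy₁+(1−ρ)y₂) + λq ≥ x. -/

import Mathlib

theorem stmt_15 (ρ y₁ y₂ x q : ℝ) (hρ : ρ ∈ Set.Icc (0 : ℝ) 1)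
    (hq : q ≤ min y₁ y₂) (hm : x < ρ * y₁ + (1 - ρ) * y₂) (hxq : q ≤ x) :
    let lam : ℝ → ℝ := fun η =>
      max 0 (min 1 ((ρ * y₁ + (1 - ρ) * y₂ - x) /
        (max 0 (ρ * y₁ + (1 - ρ) * y₂ - q) + η)))
    let F : ℝ → ℝ := fun η =>
      (1 - lam η) * (ρ * y₁ + (1 - ρ) * y₂) + lam η * q
    Filter.Tendsto F (nhdsWithin 0 (Set.Ioi 0))
        (nhds (min (ρ * y₁ + (1 - ρ) * y₂) x)) ∧
      ∀ η > (0 : ℝ), x ≤ F η := by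
  intro lam F
  set m := ρ * y₁ + (1 - ρ) * y₂ with hmdef
  obtain ⟨hρ0, hρ1⟩ := hρ
  have hq1 : q ≤ y₁ := hq.trans (min_le_left _ _)
  have hq2 : q ≤ y₂ := hq.trans (min_le_right _ _)
  have hqm : q ≤ m := by nlinarith
  have hqx : q < m := lt_of_le_of_lt hxq hm
  have hmax : max 0 (m - q) = m - q := max_eq_right (by linarith)
  have hlam : ∀ η > (0 : ℝ), lam η = (m - x) / (m - q + η) := by
    intro η hη
    have hden : 0 < m - q + η := by linarith
    have hr0 : 0 ≤ (m - x) / (m - q + η) := div_nonneg (by linarith) hden.le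
    have hr1 : (m - x) / (m - q + η) ≤ 1 := by
      rw [div_le_one hden]; linarith
    show max 0 (min 1 ((m - x) / (max 0 (m - q) + η))) = _
    rw [hmax, min_eq_right hr1, max_eq_right hr0]
  have hF : ∀ η > (0 : ℝ), F η = m - (m - x) / (m - q + η) * (m - q) := by
    intro η hη
    simp only [F, hlam η hη]; ring
  constructor
  · have hcont : Filter.Tendsto (fun η : ℝ => m - (m - x) / (m - q + η) * (m - q))
        (nhds 0) (nhds x) := by
      have h1 : Filter.Tendsto (fun η : ℝ => m - q + η) (nhds 0) (nhds (m - q)) := by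
        simpa using (tendsto_const_nhds (x := m - q)).add (Filter.tendsto_id.mono_right (le_of_eq rfl) : Filter.Tendsto (fun η : ℝ => η) (nhds 0) (nhds 0))
      have h2 : Filter.Tendsto (fun η : ℝ => (m - x) / (m - q + η)) (nhds 0)
          (nhds ((m - x) / (m - q))) :=
        Filter.Tendsto.div tendsto_const_nhds h1 (by linarith)
      have h3 : Filter.Tendsto (fun η : ℝ => m - (m - x) / (m - q + η) * (m - q))
          (nhds 0) (nhds (m - (m - x) / (m - q) * (m - q))) :=
        tendsto_const_nhds.sub (h2.mul tendsto_const_nhds)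
      have : m - (m - x) / (m - q) * (m - q) = x := by
        rw [div_mul_cancel₀ _ (by linarith : m - q ≠ 0)]; ring
      simpa [this] using h3
    have htw := hcont.mono_left (nhdsWithin_le_nhds (s := Set.Ioi (0:ℝ)))
    have heq : F =ᶠ[nhdsWithin (0:ℝ) (Set.Ioi 0)]
        (fun η : ℝ => m - (m - x) / (m - q + η) * (m - q)) := by
      filter_upwards [self_mem_nhdsWithin] with η hη
      exact hF η hη
    have hminx : min m x = x := min_eq_right hm.le
    rw [hminx]
    exact htw.congr' heq.symm
  · intro η hη
    rw [hF η hη]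
    have hden : 0 < m - q + η := by linarith
    have : (m - x) / (m - q + η) * (m - q) ≤ m - x := by
      rw [div_mul_eq_mul_div, div_le_iff₀ hden]
      nlinarith
    linarith
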